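/- Assume U continuous with 0 < U₁ ≤ U(x,ξ) ≤ U₂ on [ε, ħω_D]² and fix T ∈ [0, τ₂]. Then there exists u₀ ∈ V_T satisfying the BCS gap equation u₀(x) = ∫_ε^{ħω_D} U(x,ξ)(u₀(ξ)/√(ξ²+u₀(ξ)²)) tanh(√(ξ²+u₀(ξ)²)/(2T)) dξ for all x ∈ [ε, ħω_D]; in particular Δ₁(T) ≤ u₀(x) ≤ Δ₂(T) for all x. -/

import Mathlib

/-- The tanh factor tanh(r/(2T)), interpreted as 1 at T = 0. -/
noncomputable def tanhFac (T r : ℝ) : ℝ :=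
  if T = 0 then 1 else Real.tanh (r / (2 * T))

lemma myTanh.hasDerivAt (x : ℝ) : HasDerivAt Real.tanh (1 / Real.cosh x ^ 2) x := by
  have h := (Real.hasDerivAt_sinh x).div (Real.hasDerivAt_cosh x) (Real.cosh_pos x).ne'
  have heq : Real.tanh = fun y => Real.sinh y / Real.cosh y :=
    funext fun y => Real.tanh_eq_sinh_div_cosh y
  rw [heq]
  refine h.congr_deriv ?_
  have h2 := Real.cosh_sq_sub_sinh_sq x
  field_simp
  nlinarith [Real.cosh_pos x]

lemma myTanh.continuous : Continuous Real.tanh := by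
  have heq : Real.tanh = fun y => Real.sinh y / Real.cosh y :=
    funext fun y => Real.tanh_eq_sinh_div_cosh y
  rw [heq]
  exact Real.continuous_sinh.div Real.continuous_cosh fun x => (Real.cosh_pos x).ne'

lemma myTanh.monotone : Monotone Real.tanh := by
  apply monotone_of_deriv_nonneg
  · exact fun x => (myTanh.hasDerivAt x).differentiableAt
  · intro x
    rw [(myTanh.hasDerivAt x).deriv]
    positivity

lemma myTanh.nonneg {x : ℝ} (hx : 0 ≤ x) : 0 ≤ Real.tanh x := by
  simpa [Real.tanh_zero] using myTanh.monotone hx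

lemma myTanh.le_one (x : ℝ) : Real.tanh x ≤ 1 := by
  rw [Real.tanh_eq_sinh_div_cosh, div_le_one (Real.cosh_pos x), Real.sinh_eq, Real.cosh_eq]
  linarith [Real.exp_pos (-x)]

lemma myTanh.div_self_antitoneOn : AntitoneOn (fun s => Real.tanh s / s) (Set.Ioi 0) := by
  have hd : ∀ x : ℝ, x ≠ 0 → HasDerivAt (fun s => Real.tanh s / s)
      ((1 / Real.cosh x ^ 2 * x - Real.tanh x * 1) / x ^ 2) x := by
    intro x hx
    exact (myTanh.hasDerivAt x).div (hasDerivAt_id x) hx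
  apply antitoneOn_of_deriv_nonpos (convex_Ioi (0:ℝ))
  · intro x hx
    exact ((hd x (ne_of_gt hx)).continuousAt).continuousWithinAt
  · intro x hx
    rw [interior_Ioi] at hx
    exact ((hd x (ne_of_gt hx)).differentiableAt).differentiableWithinAt
  · intro x hx
    rw [interior_Ioi] at hx
    rw [(hd x (ne_of_gt hx)).deriv]
    apply div_nonpos_of_nonpos_of_nonneg _ (sq_nonneg x)
    have h1 : x ≤ Real.sinh x * Real.cosh x := by
      have hs : x ≤ Real.sinh x := (Real.self_le_sinh_iff).2 hx.le
      have hc : 1 ≤ Real.cosh x := Real.one_le_cosh x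
      nlinarith [Real.sinh_nonneg_iff.2 hx.le]
    rw [Real.tanh_eq_sinh_div_cosh, sub_nonpos, div_mul_eq_mul_div, mul_one,
      div_le_div_iff₀ (by positivity) (Real.cosh_pos x)]
    nlinarith [Real.cosh_pos x]

section tanhFac

variable {T r r₁ r₂ : ℝ}

lemma tanhFac_nonneg (hT : 0 ≤ T) (hr : 0 ≤ r) : 0 ≤ tanhFac T r := by
  unfold tanhFac
  split
  · norm_num
  · exact myTanh.nonneg (by positivity)

lemma tanhFac_le_one (hT : 0 ≤ T) : tanhFac T r ≤ 1 := by
  unfold tanhFac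
  split
  · exact le_refl 1
  · exact myTanh.le_one _

lemma tanhFac_mono (hT : 0 ≤ T) (h : r₁ ≤ r₂) : tanhFac T r₁ ≤ tanhFac T r₂ := by
  unfold tanhFac
  split
  · exact le_refl 1
  · rename_i hT0
    have hTpos : 0 < T := lt_of_le_of_ne hT (Ne.symm hT0)
    have h2 : (0:ℝ) < 2 * T := by positivity
    exact myTanh.monotone (by gcongr)

lemma tanhFac_continuous (T : ℝ) : Continuous fun r => tanhFac T r := by
  unfold tanhFac
  split
  · exact continuous_const
  · exact myTanh.continuous.comp (continuous_id.div_const _)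

/-- key antitone property: r ↦ (1/r) * tanhFac T r is antitone on (0, ∞) -/
lemma tanhFac_div_antitone (hT : 0 ≤ T) (h1 : 0 < r₁) (h : r₁ ≤ r₂) :
    (1 / r₂) * tanhFac T r₂ ≤ (1 / r₁) * tanhFac T r₁ := by
  have h2 : 0 < r₂ := lt_of_lt_of_le h1 h
  unfold tanhFac
  split
  · simp only [mul_one]
    gcongr
  · rename_i hT0
    have hTpos : 0 < T := lt_of_le_of_ne hT (Ne.symm hT0)
    have key := myTanh.div_self_antitoneOn (Set.mem_Ioi.2 (by positivity : (0:ℝ) < r₁ / (2*T)))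
      (Set.mem_Ioi.2 (by positivity : (0:ℝ) < r₂ / (2*T))) (by gcongr)
    simp only at key
    have e1 : Real.tanh (r₂ / (2*T)) / (r₂ / (2*T)) = (2*T) * ((1/r₂) * Real.tanh (r₂ / (2*T))) := by
      field_simp
    have e2 : Real.tanh (r₁ / (2*T)) / (r₁ / (2*T)) = (2*T) * ((1/r₁) * Real.tanh (r₁ / (2*T))) := by
      field_simp
    rw [e1, e2] at key
    exact le_of_mul_le_mul_left key (by positivity)

end tanhFac

noncomputable def gFun (T ξ t : ℝ) : ℝ :=
  t / Real.sqrt (ξ ^ 2 + t ^ 2) * tanhFac T (Real.sqrt (ξ ^ 2 + t ^ 2))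

section gFun

variable {T ξ t a b : ℝ}

lemma sqrt_aux_pos (hξ : 0 < ξ) : 0 < Real.sqrt (ξ ^ 2 + t ^ 2) :=
  Real.sqrt_pos.2 (by positivity)

lemma gFun_zero (T ξ : ℝ) : gFun T ξ 0 = 0 := by simp [gFun]

lemma gFun_nonneg (hT : 0 ≤ T) (hξ : 0 < ξ) (ht : 0 ≤ t) : 0 ≤ gFun T ξ t := by
  unfold gFun
  have h1 := sqrt_aux_pos (t := t) hξ
  have h2 := tanhFac_nonneg hT h1.le
  positivity

lemma gFun_le_one (hT : 0 ≤ T) (hξ : 0 < ξ) (ht : 0 ≤ t) : gFun T ξ t ≤ 1 := by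
  unfold gFun
  have h1 := sqrt_aux_pos (t := t) hξ
  have ht' : t ≤ Real.sqrt (ξ ^ 2 + t ^ 2) := by
    have h := Real.sqrt_le_sqrt (show t ^ 2 ≤ ξ ^ 2 + t ^ 2 by nlinarith [sq_nonneg ξ])
    rwa [Real.sqrt_sq ht] at h
  calc t / Real.sqrt (ξ ^ 2 + t ^ 2) * tanhFac T (Real.sqrt (ξ ^ 2 + t ^ 2))
      ≤ 1 * 1 := by
        apply mul_le_mul _ (tanhFac_le_one hT) (tanhFac_nonneg hT h1.le) zero_le_one
        rw [div_le_one h1]; exact ht'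
    _ = 1 := one_mul 1

lemma gFun_mono (hT : 0 ≤ T) (hξ : 0 < ξ) (ha : 0 ≤ a) (hab : a ≤ b) :
    gFun T ξ a ≤ gFun T ξ b := by
  unfold gFun
  have hsa := sqrt_aux_pos (t := a) hξ
  have hsb := sqrt_aux_pos (t := b) hξ
  have hb : 0 ≤ b := le_trans ha hab
  have hsle : Real.sqrt (ξ ^ 2 + a ^ 2) ≤ Real.sqrt (ξ ^ 2 + b ^ 2) :=
    Real.sqrt_le_sqrt (by nlinarith)
  apply mul_le_mul _ (tanhFac_mono hT hsle) (tanhFac_nonneg hT hsa.le)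
  · have : (0:ℝ) ≤ b / Real.sqrt (ξ ^ 2 + b ^ 2) := by positivity
    exact this
  · rw [div_le_div_iff₀ hsa hsb]
    have e1 : a * Real.sqrt (ξ ^ 2 + b ^ 2) = Real.sqrt (a^2 * (ξ ^ 2 + b ^ 2)) := by
      rw [Real.sqrt_mul (by positivity), Real.sqrt_sq ha]
    have e2 : b * Real.sqrt (ξ ^ 2 + a ^ 2) = Real.sqrt (b^2 * (ξ ^ 2 + a ^ 2)) := by
      rw [Real.sqrt_mul (by positivity), Real.sqrt_sq hb]
    rw [e1, e2]
    apply Real.sqrt_le_sqrt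
    nlinarith [sq_nonneg ξ, mul_self_le_mul_self ha hab]

lemma gFun_continuous_t (T : ℝ) (hξ : ξ ≠ 0) : Continuous fun t => gFun T ξ t := by
  unfold gFun
  have hs : Continuous fun t : ℝ => Real.sqrt (ξ ^ 2 + t ^ 2) :=
    Real.continuous_sqrt.comp (by continuity)
  have hne : ∀ t : ℝ, Real.sqrt (ξ ^ 2 + t ^ 2) ≠ 0 := by
    intro t
    exact (Real.sqrt_pos.2 (by positivity)).ne'
  exact (continuous_id.div hs hne).mul ((tanhFac_continuous T).comp hs)

lemma gFun_measurable (T : ℝ) : Measurable fun p : ℝ × ℝ => gFun T p.1 p.2 := by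
  unfold gFun
  have hs : Measurable fun p : ℝ × ℝ => Real.sqrt (p.1 ^ 2 + p.2 ^ 2) :=
    Real.continuous_sqrt.measurable.comp
      ((measurable_fst.pow_const 2).add (measurable_snd.pow_const 2))
  exact (measurable_snd.div hs).mul (((tanhFac_continuous T).measurable).comp hs)

end gFun

open MeasureTheory Filter Topology

/-- Existence of a solution u₀ ∈ V_T to the BCS gap equation, with
Δ₁(T) ≤ u₀(x) ≤ Δ₂(T) for all x ∈ [ε, ħω_D]. -/
theorem stmt14 (U₁ U₂ ε ω τ₁ τ₂ : ℝ) (hε : 0 < ε) (hεω : ε < ω)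
    (hU₁ : 0 < U₁) (hU₁₂ : U₁ < U₂)
    (U : ℝ → ℝ → ℝ)
    (hUcont : ContinuousOn (fun p : ℝ × ℝ => U p.1 p.2) (Set.Icc ε ω ×ˢ Set.Icc ε ω))
    (hUbd : ∀ x ∈ Set.Icc ε ω, ∀ ξ ∈ Set.Icc ε ω, U₁ ≤ U x ξ ∧ U x ξ ≤ U₂)
    (hτ₁pos : 0 < τ₁) (hτ₂pos : 0 < τ₂)
    (hτ₁ : 1 = U₁ * ∫ ξ in ε..ω, (1 / ξ) * Real.tanh (ξ / (2 * τ₁)))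
    (hτ₂ : 1 = U₂ * ∫ ξ in ε..ω, (1 / ξ) * Real.tanh (ξ / (2 * τ₂)))
    (T Δ₁ Δ₂ : ℝ) (hT : 0 ≤ T) (hTτ₂ : T ≤ τ₂)
    (hΔ₁nonneg : 0 ≤ Δ₁) (hΔ₂nonneg : 0 ≤ Δ₂)
    (hΔ₁eq : T < τ₁ →
      1 = U₁ * ∫ ξ in ε..ω,
        (1 / Real.sqrt (ξ ^ 2 + Δ₁ ^ 2)) * tanhFac T (Real.sqrt (ξ ^ 2 + Δ₁ ^ 2)))
    (hΔ₁zero : τ₁ ≤ T → Δ₁ = 0)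
    (hΔ₂eq : T < τ₂ →
      1 = U₂ * ∫ ξ in ε..ω,
        (1 / Real.sqrt (ξ ^ 2 + Δ₂ ^ 2)) * tanhFac T (Real.sqrt (ξ ^ 2 + Δ₂ ^ 2)))
    (hΔ₂zero : τ₂ ≤ T → Δ₂ = 0) :
    ∃ u₀ : ℝ → ℝ, ContinuousOn u₀ (Set.Icc ε ω) ∧
      (∀ x ∈ Set.Icc ε ω, Δ₁ ≤ u₀ x ∧ u₀ x ≤ Δ₂) ∧
      ∀ x ∈ Set.Icc ε ω,
        u₀ x = ∫ ξ in ε..ω,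
          U x ξ * (u₀ ξ / Real.sqrt (ξ ^ 2 + u₀ ξ ^ 2)) *
            tanhFac T (Real.sqrt (ξ ^ 2 + u₀ ξ ^ 2)) := by
  have hεω' : ε ≤ ω := hεω.le
  have hIoc : Set.uIoc ε ω = Set.Ioc ε ω := Set.uIoc_of_le hεω'
  have hIcc : Set.uIcc ε ω = Set.Icc ε ω := Set.uIcc_of_le hεω'
  set μ := MeasureTheory.volume.restrict (Set.uIoc ε ω) with hμ
  have hsub : Set.uIoc ε ω ⊆ Set.Icc ε ω := by rw [hIoc]; exact Set.Ioc_subset_Icc_self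
  have hξpos : ∀ ξ ∈ Set.Icc ε ω, 0 < ξ := fun ξ hξ => lt_of_lt_of_le hε hξ.1
  have hμle : μ ≤ MeasureTheory.volume.restrict (Set.Icc ε ω) :=
    Measure.restrict_mono hsub le_rfl
  -- the auxiliary density function
  set fc : ℝ → ℝ → ℝ := fun c ξ =>
    (1 / Real.sqrt (ξ ^ 2 + c ^ 2)) * tanhFac T (Real.sqrt (ξ ^ 2 + c ^ 2)) with hfc
  have hgfc : ∀ c ξ : ℝ, gFun T ξ c = c * fc c ξ := by
    intro c ξ
    simp only [hfc, gFun, div_eq_mul_inv, one_div]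
    ring
  -- continuity of fc
  have hfc_cont : ∀ c : ℝ, ContinuousOn (fc c) (Set.Icc ε ω) := by
    intro c
    have hs : Continuous fun ξ : ℝ => Real.sqrt (ξ ^ 2 + c ^ 2) :=
      Real.continuous_sqrt.comp ((continuous_pow 2).add continuous_const)
    exact (continuousOn_const.div hs.continuousOn
        (fun ξ hξ => (sqrt_aux_pos (hξpos ξ hξ)).ne')).mul
      (((tanhFac_continuous T).comp hs).continuousOn)
  have hfc_int : ∀ c : ℝ, IntervalIntegrable (fc c) MeasureTheory.volume ε ω := by
    intro c
    apply ContinuousOn.intervalIntegrable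
    rw [hIcc]
    exact hfc_cont c
  -- fc is antitone in c (for c ≥ 0), pointwise on Icc
  have hfc_mono : ∀ c d : ℝ, 0 ≤ c → c ≤ d → ∀ ξ ∈ Set.Icc ε ω, fc d ξ ≤ fc c ξ := by
    intro c d hc hcd ξ hξ
    have h1 : 0 < Real.sqrt (ξ ^ 2 + c ^ 2) := sqrt_aux_pos (hξpos ξ hξ)
    have h2 : Real.sqrt (ξ ^ 2 + c ^ 2) ≤ Real.sqrt (ξ ^ 2 + d ^ 2) :=
      Real.sqrt_le_sqrt (by nlinarith [mul_self_le_mul_self hc hcd])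
    exact tanhFac_div_antitone hT h1 h2
  -- fc 0 agrees with the (1/ξ) tanh integrand when T > 0
  have hfc0 : ∀ Tv : ℝ, 0 < Tv → T = Tv → Set.EqOn (fun ξ => (1 / ξ) * Real.tanh (ξ / (2 * Tv)))
      (fc 0) (Set.uIcc ε ω) := by
    intro Tv hTv hTTv ξ hξ
    rw [hIcc] at hξ
    have : Real.sqrt (ξ ^ 2 + 0 ^ 2) = ξ := by
      rw [show ξ ^ 2 + 0 ^ 2 = ξ ^ 2 by ring, Real.sqrt_sq (hξpos ξ hξ).le]
    simp only [hfc, this, tanhFac, hTTv, if_neg hTv.ne']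
  -- from the gap equations, express the integrals
  have hIeq : ∀ c Uc : ℝ, 0 < Uc → (1 = Uc * ∫ ξ in ε..ω, fc c ξ) →
      (∫ ξ in ε..ω, fc c ξ) = 1 / Uc := by
    intro c Uc hUc h
    field_simp at h ⊢
    linarith
  -- Δ₁ ≤ Δ₂
  have hΔ12 : Δ₁ ≤ Δ₂ := by
    by_contra hcon
    push_neg at hcon
    have hT1 : T < τ₁ := by
      by_contra h1
      push_neg at h1
      have := hΔ₁zero h1
      linarith
    have e1 : (∫ ξ in ε..ω, fc Δ₁ ξ) = 1 / U₁ := hIeq Δ₁ U₁ hU₁ (hΔ₁eq hT1)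
    rcases lt_or_eq_of_le hTτ₂ with hT2 | hT2
    · have e2 : (∫ ξ in ε..ω, fc Δ₂ ξ) = 1 / U₂ := hIeq Δ₂ U₂ (hU₁.trans hU₁₂) (hΔ₂eq hT2)
      have hle : (∫ ξ in ε..ω, fc Δ₁ ξ) ≤ ∫ ξ in ε..ω, fc Δ₂ ξ :=
        intervalIntegral.integral_mono_on hεω' (hfc_int Δ₁) (hfc_int Δ₂)
          (hfc_mono Δ₂ Δ₁ hΔ₂nonneg hcon.le)
      rw [e1, e2] at hle
      have : U₂ ≤ U₁ := by
        rw [div_le_div_iff₀ hU₁ (hU₁.trans hU₁₂)] at hle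
        linarith
      linarith
    · -- T = τ₂ : contradiction regardless
      have e2' : (∫ ξ in ε..ω, fc 0 ξ) = 1 / U₂ := by
        apply hIeq 0 U₂ (hU₁.trans hU₁₂)
        rwa [← intervalIntegral.integral_congr (hfc0 τ₂ hτ₂pos hT2)]
      have hle : (∫ ξ in ε..ω, fc Δ₁ ξ) ≤ ∫ ξ in ε..ω, fc 0 ξ :=
        intervalIntegral.integral_mono_on hεω' (hfc_int Δ₁) (hfc_int 0)
          (hfc_mono 0 Δ₁ le_rfl hΔ₁nonneg)
      rw [e1, e2'] at hle
      have : U₂ ≤ U₁ := by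
        rw [div_le_div_iff₀ hU₁ (hU₁.trans hU₁₂)] at hle
        linarith
      linarith
  -- generic integrability of bounded a.e.-measurable functions on [ε, ω]
  have hIntBdd : ∀ (W : ℝ → ℝ) (C : ℝ), MeasureTheory.AEStronglyMeasurable W μ →
      (∀ ξ ∈ Set.Icc ε ω, |W ξ| ≤ C) → IntervalIntegrable W MeasureTheory.volume ε ω := by
    intro W C hm hb
    rw [intervalIntegrable_iff]
    have hCint : MeasureTheory.Integrable (fun _ => C) μ := by
      rw [hμ]
      exact MeasureTheory.integrableOn_const (by rw [hIoc]; exact measure_Ioc_lt_top.ne)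
    apply MeasureTheory.Integrable.mono' hCint hm
    refine (MeasureTheory.ae_restrict_iff' measurableSet_uIoc).2 (MeasureTheory.ae_of_all _ ?_)
    intro ξ hξ
    rw [Real.norm_eq_abs]
    exact hb ξ (hsub hξ)
  -- measurability of the kernel slices
  have hUm : ∀ x ∈ Set.Icc ε ω, MeasureTheory.AEStronglyMeasurable (fun ξ => U x ξ) μ := by
    intro x hx
    have hcont : ContinuousOn (fun ξ => U x ξ) (Set.Icc ε ω) := by
      have : ContinuousOn ((fun p : ℝ × ℝ => U p.1 p.2) ∘ fun ξ => (x, ξ)) (Set.Icc ε ω) :=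
        hUcont.comp ((continuous_const.prodMk continuous_id).continuousOn)
          (fun ξ hξ => ⟨hx, hξ⟩)
      exact this
    exact (hcont.aestronglyMeasurable measurableSet_Icc).mono_measure hμle
  have hgm : ∀ v : ℝ → ℝ, AEMeasurable v μ →
      MeasureTheory.AEStronglyMeasurable (fun ξ => gFun T ξ (v ξ)) μ := by
    intro v hv
    have hpair : AEMeasurable (fun ξ => (ξ, v ξ)) μ :=
      aemeasurable_id.prodMk hv
    exact ((gFun_measurable T).comp_aemeasurable hpair).aestronglyMeasurable
  have hfc_nonneg : ∀ c : ℝ, ∀ ξ ∈ Set.Icc ε ω, 0 ≤ fc c ξ := by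
    intro c ξ hξ
    have h1 : 0 < Real.sqrt (ξ ^ 2 + c ^ 2) := sqrt_aux_pos (hξpos ξ hξ)
    have h2 := tanhFac_nonneg hT h1.le
    simp only [hfc]
    positivity
  have habs : ∀ v : ℝ → ℝ, (∀ ξ ∈ Set.Icc ε ω, 0 ≤ v ξ) → ∀ x ∈ Set.Icc ε ω,
      ∀ ξ ∈ Set.Icc ε ω, |U x ξ * gFun T ξ (v ξ)| ≤ U₂ := by
    intro v hv x hx ξ hξ
    obtain ⟨hUl, hUr⟩ := hUbd x hx ξ hξ
    have hg0 := gFun_nonneg hT (hξpos ξ hξ) (hv ξ hξ)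
    have hg1 := gFun_le_one hT (hξpos ξ hξ) (hv ξ hξ)
    rw [abs_of_nonneg (by nlinarith)]
    nlinarith
  have hIntA : ∀ v : ℝ → ℝ, AEMeasurable v μ → (∀ ξ ∈ Set.Icc ε ω, 0 ≤ v ξ) →
      ∀ x ∈ Set.Icc ε ω,
      IntervalIntegrable (fun ξ => U x ξ * gFun T ξ (v ξ)) MeasureTheory.volume ε ω := by
    intro v hv hv0 x hx
    exact hIntBdd _ U₂ ((hUm x hx).mul (hgm v hv)) (habs v hv0 x hx)
  have hAmono : ∀ v w : ℝ → ℝ, AEMeasurable v μ → AEMeasurable w μ →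
      (∀ ξ ∈ Set.Icc ε ω, 0 ≤ v ξ) → (∀ ξ ∈ Set.Icc ε ω, v ξ ≤ w ξ) →
      ∀ x ∈ Set.Icc ε ω,
      (∫ ξ in ε..ω, U x ξ * gFun T ξ (v ξ)) ≤ ∫ ξ in ε..ω, U x ξ * gFun T ξ (w ξ) := by
    intro v w hv hw hv0 hvw x hx
    apply intervalIntegral.integral_mono_on hεω' (hIntA v hv hv0 x hx)
      (hIntA w hw (fun ξ hξ => le_trans (hv0 ξ hξ) (hvw ξ hξ)) x hx)
    intro ξ hξ
    have hg := gFun_mono hT (hξpos ξ hξ) (hv0 ξ hξ) (hvw ξ hξ)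
    have hU := (hUbd x hx ξ hξ).1
    exact mul_le_mul_of_nonneg_left hg (by linarith)
  have hconstint : ∀ c Uc : ℝ, (∫ ξ in ε..ω, Uc * (c * fc c ξ)) =
      c * (Uc * ∫ ξ in ε..ω, fc c ξ) := by
    intro c Uc
    rw [intervalIntegral.integral_const_mul, intervalIntegral.integral_const_mul]
    ring
  have hAub : ∀ v : ℝ → ℝ, AEMeasurable v μ → (∀ ξ ∈ Set.Icc ε ω, 0 ≤ v ξ ∧ v ξ ≤ Δ₂) →
      ∀ x ∈ Set.Icc ε ω, (∫ ξ in ε..ω, U x ξ * gFun T ξ (v ξ)) ≤ Δ₂ := by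
    intro v hv hbd x hx
    rcases lt_or_eq_of_le hTτ₂ with hT2 | hT2
    · have h2 : (∫ ξ in ε..ω, U x ξ * gFun T ξ (v ξ)) ≤ ∫ ξ in ε..ω, U₂ * (Δ₂ * fc Δ₂ ξ) := by
        apply intervalIntegral.integral_mono_on hεω'
          (hIntA v hv (fun ξ hξ => (hbd ξ hξ).1) x hx)
          (((hfc_int Δ₂).const_mul Δ₂).const_mul U₂)
        intro ξ hξ
        rw [← hgfc Δ₂ ξ]
        have hg := gFun_mono hT (hξpos ξ hξ) (hbd ξ hξ).1 (hbd ξ hξ).2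
        have hg0 := gFun_nonneg hT (hξpos ξ hξ) (le_trans (hbd ξ hξ).1 (hbd ξ hξ).2)
        obtain ⟨hUl, hUr⟩ := hUbd x hx ξ hξ
        calc U x ξ * gFun T ξ (v ξ) ≤ U x ξ * gFun T ξ Δ₂ :=
              mul_le_mul_of_nonneg_left hg (by linarith)
          _ ≤ U₂ * gFun T ξ Δ₂ := mul_le_mul_of_nonneg_right hUr hg0
      refine le_trans h2 ?_
      rw [hconstint Δ₂ U₂, hIeq Δ₂ U₂ (hU₁.trans hU₁₂) (hΔ₂eq hT2),
        mul_one_div, div_self (hU₁.trans hU₁₂).ne', mul_one]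
    · have hΔ₂0 : Δ₂ = 0 := hΔ₂zero hT2.ge
      have hveq : ∀ ξ ∈ Set.Icc ε ω, v ξ = 0 := by
        intro ξ hξ
        have := hbd ξ hξ
        rw [hΔ₂0] at this
        linarith [this.1, this.2]
      have : (∫ ξ in ε..ω, U x ξ * gFun T ξ (v ξ)) = ∫ ξ in ε..ω, (0:ℝ) := by
        apply intervalIntegral.integral_congr
        intro ξ hξ
        rw [hIcc] at hξ
        show U x ξ * gFun T ξ (v ξ) = (0:ℝ)
        rw [hveq ξ hξ, gFun_zero, mul_zero]
      rw [this, hΔ₂0]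
      simp
  have hAlb : ∀ v : ℝ → ℝ, AEMeasurable v μ → (∀ ξ ∈ Set.Icc ε ω, Δ₁ ≤ v ξ ∧ v ξ ≤ Δ₂) →
      ∀ x ∈ Set.Icc ε ω, Δ₁ ≤ ∫ ξ in ε..ω, U x ξ * gFun T ξ (v ξ) := by
    intro v hv hbd x hx
    have hv0 : ∀ ξ ∈ Set.Icc ε ω, 0 ≤ v ξ := fun ξ hξ => le_trans hΔ₁nonneg (hbd ξ hξ).1
    rcases lt_or_ge T τ₁ with hT1 | hT1
    · have h2 : (∫ ξ in ε..ω, U₁ * (Δ₁ * fc Δ₁ ξ)) ≤ ∫ ξ in ε..ω, U x ξ * gFun T ξ (v ξ) := by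
        apply intervalIntegral.integral_mono_on hεω'
          (((hfc_int Δ₁).const_mul Δ₁).const_mul U₁)
          (hIntA v hv hv0 x hx)
        intro ξ hξ
        rw [← hgfc Δ₁ ξ]
        have hg := gFun_mono hT (hξpos ξ hξ) hΔ₁nonneg (hbd ξ hξ).1
        have hg0 := gFun_nonneg hT (hξpos ξ hξ) hΔ₁nonneg
        obtain ⟨hUl, hUr⟩ := hUbd x hx ξ hξ
        calc U₁ * gFun T ξ Δ₁ ≤ U x ξ * gFun T ξ Δ₁ := mul_le_mul_of_nonneg_right hUl hg0
          _ ≤ U x ξ * gFun T ξ (v ξ) := mul_le_mul_of_nonneg_left hg (by linarith)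
      refine le_trans ?_ h2
      rw [hconstint Δ₁ U₁, hIeq Δ₁ U₁ hU₁ (hΔ₁eq hT1),
        mul_one_div, div_self hU₁.ne', mul_one]
    · rw [hΔ₁zero hT1]
      apply intervalIntegral.integral_nonneg hεω'
      intro ξ hξ
      have hg0 := gFun_nonneg hT (hξpos ξ hξ) (hv0 ξ hξ)
      have hUl := (hUbd x hx ξ hξ).1
      nlinarith
  -- continuity of the operator output
  have hAcont : ∀ v : ℝ → ℝ, AEMeasurable v μ → (∀ ξ ∈ Set.Icc ε ω, 0 ≤ v ξ) →
      ContinuousOn (fun x => ∫ ξ in ε..ω, U x ξ * gFun T ξ (v ξ)) (Set.Icc ε ω) := by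
    intro v hv hv0 x₀ hx₀
    apply intervalIntegral.continuousWithinAt_of_dominated_interval
      (bound := fun _ => U₂)
    · filter_upwards [self_mem_nhdsWithin] with x hx
      exact (hUm x hx).mul (hgm v hv)
    · filter_upwards [self_mem_nhdsWithin] with x hx
      refine MeasureTheory.ae_of_all _ fun ξ hξ => ?_
      rw [Real.norm_eq_abs]
      exact habs v hv0 x hx ξ (hsub hξ)
    · exact intervalIntegrable_const
    · refine MeasureTheory.ae_of_all _ fun ξ hξ => ?_
      have hξ' := hsub hξ
      have hcwa : ContinuousWithinAt (fun x => U x ξ) (Set.Icc ε ω) x₀ := by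
        have hpm : ContinuousWithinAt (fun x : ℝ => (x, ξ)) (Set.Icc ε ω) x₀ :=
          (continuous_id.prodMk continuous_const).continuousWithinAt
        have hmap : Set.MapsTo (fun x : ℝ => (x, ξ)) (Set.Icc ε ω)
            (Set.Icc ε ω ×ˢ Set.Icc ε ω) := fun x hx => ⟨hx, hξ'⟩
        have h3 := ContinuousWithinAt.comp (f := fun x : ℝ => (x, ξ)) (x := x₀)
          (hUcont (x₀, ξ) ⟨hx₀, hξ'⟩) hpm hmap
        exact h3
      exact hcwa.mul continuousWithinAt_const
  -- the iteration sequence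
  set A : (ℝ → ℝ) → ℝ → ℝ := fun v x => ∫ ξ in ε..ω, U x ξ * gFun T ξ (v ξ) with hA
  set u : ℕ → ℝ → ℝ := fun n => Nat.rec (fun _ => Δ₂) (fun _ v => A v) n with hu
  have huS : ∀ n, u (n + 1) = A (u n) := fun n => rfl
  have hInv : ∀ n, ContinuousOn (u n) (Set.Icc ε ω) ∧
      (∀ ξ ∈ Set.Icc ε ω, Δ₁ ≤ u n ξ ∧ u n ξ ≤ Δ₂) := by
    intro n
    induction n with
    | zero => exact ⟨continuousOn_const, fun ξ _ => ⟨hΔ12, le_rfl⟩⟩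
    | succ n ih =>
      have hm : AEMeasurable (u n) μ :=
        ((ih.1.aestronglyMeasurable measurableSet_Icc).aemeasurable).mono_measure hμle
      have h0 : ∀ ξ ∈ Set.Icc ε ω, 0 ≤ u n ξ :=
        fun ξ hξ => le_trans hΔ₁nonneg (ih.2 ξ hξ).1
      refine ⟨?_, fun x hx => ⟨hAlb (u n) hm ih.2 x hx, hAub (u n) hm
        (fun ξ hξ => ⟨h0 ξ hξ, (ih.2 ξ hξ).2⟩) x hx⟩⟩
      rw [huS n]
      exact hAcont (u n) hm h0
  have hum : ∀ n, AEMeasurable (u n) μ := fun n =>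
    (((hInv n).1.aestronglyMeasurable measurableSet_Icc).aemeasurable).mono_measure hμle
  have hDec : ∀ n, ∀ x ∈ Set.Icc ε ω, u (n + 1) x ≤ u n x := by
    intro n
    induction n with
    | zero =>
      intro x hx
      rw [huS 0]
      exact hAub (u 0) (hum 0) (fun ξ hξ => ⟨le_trans hΔ₁nonneg ((hInv 0).2 ξ hξ).1,
        ((hInv 0).2 ξ hξ).2⟩) x hx
    | succ n ih =>
      intro x hx
      rw [huS (n + 1), huS n]
      exact hAmono (u (n + 1)) (u n) (hum (n + 1)) (hum n)
        (fun ξ hξ => le_trans hΔ₁nonneg ((hInv (n + 1)).2 ξ hξ).1) (fun ξ hξ => ih ξ hξ) x hx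
  -- the limit function
  set u₀ : ℝ → ℝ := fun x => ⨅ n, u n x with hu₀
  have hAnti : ∀ x ∈ Set.Icc ε ω, Antitone fun n => u n x := by
    intro x hx
    exact antitone_nat_of_succ_le fun n => hDec n x hx
  have hBdd : ∀ x ∈ Set.Icc ε ω, BddBelow (Set.range fun n => u n x) := by
    intro x hx
    exact ⟨Δ₁, fun y ⟨n, hn⟩ => hn ▸ ((hInv n).2 x hx).1⟩
  have hTen : ∀ x ∈ Set.Icc ε ω, Tendsto (fun n => u n x) atTop (𝓝 (u₀ x)) := by
    intro x hx
    exact tendsto_atTop_ciInf (hAnti x hx) (hBdd x hx)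
  have hu₀bd : ∀ x ∈ Set.Icc ε ω, Δ₁ ≤ u₀ x ∧ u₀ x ≤ Δ₂ := by
    intro x hx
    constructor
    · exact le_ciInf fun n => ((hInv n).2 x hx).1
    · exact le_trans (ciInf_le (hBdd x hx) 0) ((hInv 0).2 x hx).2
  have hu₀m : AEMeasurable u₀ μ := AEMeasurable.iInf fun n => hum n
  have hu₀0 : ∀ ξ ∈ Set.Icc ε ω, 0 ≤ u₀ ξ := fun ξ hξ =>
    le_trans hΔ₁nonneg (hu₀bd ξ hξ).1
  -- the fixed-point property
  have hFix : ∀ x ∈ Set.Icc ε ω, u₀ x = A u₀ x := by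
    intro x hx
    have h1 : Tendsto (fun n => A (u n) x) atTop (𝓝 (A u₀ x)) := by
      apply intervalIntegral.tendsto_integral_filter_of_dominated_convergence
        (bound := fun _ => U₂)
      · exact Eventually.of_forall fun n => (hUm x hx).mul (hgm (u n) (hum n))
      · refine Eventually.of_forall fun n => MeasureTheory.ae_of_all _ fun ξ hξ => ?_
        rw [Real.norm_eq_abs]
        exact habs (u n) (fun ξ' hξ' => le_trans hΔ₁nonneg ((hInv n).2 ξ' hξ').1) x hx ξ (hsub hξ)
      · exact intervalIntegrable_const
      · refine MeasureTheory.ae_of_all _ fun ξ hξ => ?_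
        have hξ' := hsub hξ
        have hgt : Tendsto (fun n => gFun T ξ (u n ξ)) atTop (𝓝 (gFun T ξ (u₀ ξ))) :=
          ((gFun_continuous_t T (hξpos ξ hξ').ne').tendsto (u₀ ξ)).comp (hTen ξ hξ')
        exact (tendsto_const_nhds.mul hgt)
    have h2 : Tendsto (fun n => A (u n) x) atTop (𝓝 (u₀ x)) := by
      have := (hTen x hx).comp (tendsto_add_atTop_nat 1)
      exact this
    exact (tendsto_nhds_unique h2 h1)
  -- conclusion
  refine ⟨u₀, ?_, hu₀bd, ?_⟩
  · apply ContinuousOn.congr (hAcont u₀ hu₀m hu₀0)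
    intro x hx
    exact hFix x hx
  · intro x hx
    rw [hFix x hx]
    apply intervalIntegral.integral_congr
    intro ξ _
    show U x ξ * gFun T ξ (u₀ ξ) =
      U x ξ * (u₀ ξ / Real.sqrt (ξ ^ 2 + u₀ ξ ^ 2)) * tanhFac T (Real.sqrt (ξ ^ 2 + u₀ ξ ^ 2))
    unfold gFun
    ring
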